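/- Let Y be a symmetric (n+1)×(n+1) positive semidefinite matrix (rows/columns indexed 0,...,n) arising in the k-stretching construction, i.e., Y = [[1, x̄ᵀ, x_v],[x̄, X̄, ȳ],[x_v, ȳᵀ, x_v]]. Then the (n+3)×(n+3) matrix Ỹ = [[1, x̄ᵀ, x_v, x_v, 1-x_v],[x̄, X̄, ȳ, ȳ, x̄-ȳ],[x_v, ȳᵀ, x_v, x_v, 0],[x_v, ȳᵀ, x_v, x_v, 0],[1-x_v, (x̄-ȳ)ᵀ, 0, 0, 1-x_v]] is also positive semidefinite. -/

import Mathlib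

/-- The matrix `Y = [[1, x̄ᵀ, x_v],[x̄, X̄, ȳ],[x_v, ȳᵀ, x_v]]` from the
`k`-stretching construction (first index block is the `0` row, the middle block
is indexed by `ι`, the last block is the `v` row). -/
def Ymat {ι : Type} (xb : ι → ℝ) (xv : ℝ) (X : Matrix ι ι ℝ) (yb : ι → ℝ) :
    Matrix (Unit ⊕ ι ⊕ Unit) (Unit ⊕ ι ⊕ Unit) ℝ :=
  Matrix.of fun p q =>
    match p, q with
    | Sum.inl _, Sum.inl _ => 1
    | Sum.inl _, Sum.inr (Sum.inl j) => xb j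
    | Sum.inl _, Sum.inr (Sum.inr _) => xv
    | Sum.inr (Sum.inl i), Sum.inl _ => xb i
    | Sum.inr (Sum.inl i), Sum.inr (Sum.inl j) => X i j
    | Sum.inr (Sum.inl i), Sum.inr (Sum.inr _) => yb i
    | Sum.inr (Sum.inr _), Sum.inl _ => xv
    | Sum.inr (Sum.inr _), Sum.inr (Sum.inl j) => yb j
    | Sum.inr (Sum.inr _), Sum.inr (Sum.inr _) => xv

/-- The matrix `Ỹ` obtained from `Y` by duplicating the `v` row/column (new
indices `v₁ = 0`, `v₂ = 1`) and appending the row/column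
`(1-x_v, (x̄-ȳ)ᵀ, 0, 0, 1-x_v)` (index `u = 2`). -/
def Ytil {ι : Type} (xb : ι → ℝ) (xv : ℝ) (X : Matrix ι ι ℝ) (yb : ι → ℝ) :
    Matrix (Unit ⊕ ι ⊕ Fin 3) (Unit ⊕ ι ⊕ Fin 3) ℝ :=
  Matrix.of fun p q =>
    match p, q with
    | Sum.inl _, Sum.inl _ => 1
    | Sum.inl _, Sum.inr (Sum.inl j) => xb j
    | Sum.inl _, Sum.inr (Sum.inr i) => if i = 2 then 1 - xv else xv
    | Sum.inr (Sum.inl i), Sum.inl _ => xb i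
    | Sum.inr (Sum.inl i), Sum.inr (Sum.inl j) => X i j
    | Sum.inr (Sum.inl i), Sum.inr (Sum.inr j) => if j = 2 then xb i - yb i else yb i
    | Sum.inr (Sum.inr i), Sum.inl _ => if i = 2 then 1 - xv else xv
    | Sum.inr (Sum.inr i), Sum.inr (Sum.inl j) => if i = 2 then xb j - yb j else yb j
    | Sum.inr (Sum.inr i), Sum.inr (Sum.inr j) =>
        if i = 2 then (if j = 2 then 1 - xv else 0)
        else (if j = 2 then 0 else xv)


/-- The transfer matrix: `Ỹ = Aᵀ Y A`. -/
def Amat {ι : Type} [DecidableEq ι] :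
    Matrix (Unit ⊕ ι ⊕ Unit) (Unit ⊕ ι ⊕ Fin 3) ℝ :=
  Matrix.of fun r c =>
    match r, c with
    | Sum.inl _, Sum.inl _ => 1
    | Sum.inl _, Sum.inr (Sum.inr k) => if k = 2 then 1 else 0
    | Sum.inr (Sum.inl i), Sum.inr (Sum.inl j) => if i = j then 1 else 0
    | Sum.inr (Sum.inr _), Sum.inr (Sum.inr k) => if k = 2 then -1 else 1
    | _, _ => 0

theorem Ytil_eq {ι : Type} [Fintype ι] [DecidableEq ι]
    (xb : ι → ℝ) (xv : ℝ) (X : Matrix ι ι ℝ) (yb : ι → ℝ) :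
    Ytil xb xv X yb = @HMul.hMul _ _ _ Matrix.instHMulOfFintypeOfMulOfAddCommMonoid
      (@HMul.hMul _ _ _ Matrix.instHMulOfFintypeOfMulOfAddCommMonoid
        (Amat (ι := ι)).conjTranspose (Ymat xb xv X yb)) Amat := by
  ext p q
  rcases p with _ | p | p <;> rcases q with _ | q | q <;>
    simp [Ytil, Ymat, Amat, Matrix.mul_apply, Fintype.sum_sum_type,
      Finset.sum_ite_eq, Finset.sum_ite_eq', Finset.mul_sum, Finset.sum_mul,
      mul_ite, ite_mul, Finset.sum_add_distrib] <;>
    (try fin_cases p) <;> (try fin_cases q) <;>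
    simp <;> ring

/-- Positive semidefiniteness of `Y` implies that of `Ỹ`. -/
theorem stmt9 {ι : Type} [Fintype ι] [DecidableEq ι]
    (xb : ι → ℝ) (xv : ℝ) (X : Matrix ι ι ℝ) (yb : ι → ℝ)
    (hY : (Ymat xb xv X yb).PosSemidef) :
    (Ytil xb xv X yb).PosSemidef := by
  rw [Ytil_eq]
  exact hY.conjTranspose_mul_mul_same (Amat (ι := ι))
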